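/- Let 0 ≤ μ ≤ 1/2 and μ² < ν ≤ μ/2 (so (μ,ν) is feasible and not the exceptional point (1/2, 1/4)). Then the supremum of V_∞(π) = π((1/2,1]) + (1/2)π({1/2}) over all probability measures π on [0,1] with first moment μ and second moment ν equals (ν − μ²)/(ν + 1/4 − μ). The supremum is sharp: it is the limit of V_∞ along a sequence of feasible two-point laws, though it need not be attained. -/

import Mathlib

open MeasureTheory Filter

/-- The infinite-vote endpoint `V_∞(π) = π((1/2, 1]) + (1/2) π({1/2})`. -/
noncomputable def Vinf (π : Measure ℝ) : ℝ :=
  (π (Set.Ioc (1 / 2 : ℝ) 1)).toReal + (1 / 2) * (π {(1 / 2 : ℝ)}).toReal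

/-- The two-moment class `M(μ,ν)`: probability measures on `[0,1]` with first moment `μ`
and second moment `ν`. -/
def momentClass (μ ν : ℝ) : Set (Measure ℝ) :=
  {π | IsProbabilityMeasure π ∧ π ((Set.Icc (0 : ℝ) 1)ᶜ) = 0 ∧
    (∫ q, q ∂π) = μ ∧ (∫ q, q ^ 2 ∂π) = ν}

/-! ### Auxiliary lemmas -/

lemma integrable_dirac'' {f : ℝ → ℝ} {a : ℝ} : Integrable f (Measure.dirac a) := by
  have h : f =ᵐ[Measure.dirac a] fun _ => f a := by
    rw [Filter.EventuallyEq, MeasureTheory.ae_dirac_eq]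
    exact Filter.eventually_pure.2 rfl
  exact (integrable_const (f a)).congr h.symm

/-- A two-point law with mass `1 - p` at `a` and `p` at `b`. -/
noncomputable def twoPt (p a b : ℝ) : Measure ℝ :=
  ENNReal.ofReal (1 - p) • Measure.dirac a + ENNReal.ofReal p • Measure.dirac b

lemma integral_twoPt (f : ℝ → ℝ) (p a b : ℝ) (hp0 : 0 ≤ p) (hp1 : p ≤ 1) :
    ∫ x, f x ∂(twoPt p a b) = (1 - p) * f a + p * f b := by
  rw [twoPt, integral_add_measure (integrable_dirac''.smul_measure ENNReal.ofReal_ne_top)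
      (integrable_dirac''.smul_measure ENNReal.ofReal_ne_top),
    integral_smul_measure, integral_smul_measure, integral_dirac, integral_dirac,
    ENNReal.toReal_ofReal (by linarith), ENNReal.toReal_ofReal hp0, smul_eq_mul, smul_eq_mul]

lemma twoPt_prob (p a b : ℝ) (hp0 : 0 ≤ p) (hp1 : p ≤ 1) :
    IsProbabilityMeasure (twoPt p a b) := by
  constructor
  simp only [twoPt, Measure.add_apply, Measure.smul_apply, smul_eq_mul, measure_univ, mul_one]
  rw [← ENNReal.ofReal_add (by linarith) hp0]
  norm_num

lemma twoPt_null {p a b : ℝ} {s : Set ℝ} (ha : a ∉ s) (hb : b ∉ s) : twoPt p a b s = 0 := by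
  simp [twoPt, Measure.dirac_apply, Set.indicator_of_notMem, ha, hb]

lemma twoPt_apply {p a b : ℝ} {s : Set ℝ} (ha : a ∉ s) (hb : b ∈ s) (hp0 : 0 ≤ p) :
    ((twoPt p a b) s).toReal = p := by
  simp [twoPt, Measure.dirac_apply, Set.indicator_of_notMem, ha, Set.indicator_of_mem, hb,
    ENNReal.toReal_ofReal hp0]

lemma moments_generic (μ ν a b p : ℝ) (hb : b - μ ≠ 0) (hden : b^2 - 2*μ*b + ν ≠ 0)
    (hA : a = (μ*b - ν)/(b-μ)) (hp : p = (ν - μ^2)/(b^2-2*μ*b+ν)) :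
    (1-p)*a + p*b = μ ∧ (1-p)*a^2 + p*b^2 = ν := by
  subst hA hp
  have hden' : b * (b - μ * 2) + ν ≠ 0 := by convert hden using 1; ring
  constructor <;> (field_simp; ring)

lemma alg1 (μ ν a c : ℝ) (hA : a*(1/2-μ) = μ/2 - ν) (hca : 1/2 - a = c)
    (hD : ν + 1/4 - μ ≠ 0) (hc : c ≠ 0) :
    (ν - 2*a*μ + a^2) / c^2 = (ν - μ^2)/(ν + 1/4 - μ) := by
  rw [div_eq_div_iff (pow_ne_zero 2 hc) hD, ← hca]
  linear_combination ((1/2 - a)*(a - μ) + ν - 2*a*μ + a^2) * hA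

lemma upper_bound (μ ν : ℝ) (hμlt : μ < 1 / 2)
    (hν1 : μ ^ 2 < ν) (hν2 : ν ≤ μ / 2) (π : Measure ℝ) (hπ : π ∈ momentClass μ ν) :
    Vinf π ≤ (ν - μ ^ 2) / (ν + 1 / 4 - μ) := by
  obtain ⟨hprob, hsupp, hm1, hm2⟩ := hπ
  have hD : 0 < ν + 1/4 - μ := by nlinarith [sq_nonneg (μ - 1/2)]
  have hhalf : (0:ℝ) < 1/2 - μ := by linarith
  set a := (μ/2 - ν)/(1/2 - μ) with ha
  set c := (ν + 1/4 - μ)/(1/2 - μ) with hc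
  have hcpos : 0 < c := div_pos hD hhalf
  have hA : a*(1/2-μ) = μ/2 - ν := by rw [ha, div_mul_cancel₀ _ hhalf.ne']
  have hca : 1/2 - a = c := by
    rw [hc, eq_div_iff hhalf.ne', sub_mul, hA]; ring
  have hae : ∀ᵐ x ∂π, x ∈ Set.Icc (0:ℝ) 1 := by
    rw [ae_iff]; convert hsupp using 2; rfl
  have hint1 : Integrable (fun x => x) π := by
    refine Integrable.mono' (integrable_const 1) measurable_id.aestronglyMeasurable ?_
    filter_upwards [hae] with x hx
    rw [Real.norm_eq_abs, abs_le]; exact ⟨by linarith [hx.1], hx.2⟩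
  have hint2 : Integrable (fun x => x^2) π := by
    refine Integrable.mono' (integrable_const 1)
      ((measurable_id.pow_const 2).aestronglyMeasurable) ?_
    filter_upwards [hae] with x hx
    rw [Real.norm_eq_abs, abs_le]
    constructor <;> nlinarith [hx.1, hx.2]
  have hsub : Integrable (fun x => x^2 - 2*a*x) π := hint2.sub (hint1.const_mul (2*a))
  have hQint : Integrable (fun x => (x^2 - 2*a*x + a^2) / c^2) π :=
    ((hsub.add (integrable_const (a^2))).div_const (c^2))
  have hQval : ∫ x, (x^2 - 2*a*x + a^2) / c^2 ∂π = (ν - 2*a*μ + a^2) / c^2 := by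
    rw [integral_div, integral_add hsub (integrable_const (a^2)),
      integral_sub hint2 (hint1.const_mul (2*a)), hm2, integral_const_mul, hm1, integral_const,
      probReal_univ]
    simp
  have i1 : Integrable ((Set.Ioc (1/2:ℝ) 1).indicator (1:ℝ→ℝ)) π :=
    (integrable_const 1).indicator measurableSet_Ioc
  have i2 : Integrable (({(1/2:ℝ)} : Set ℝ).indicator (1:ℝ→ℝ)) π :=
    (integrable_const 1).indicator (measurableSet_singleton _)
  have hVinf : Vinf π = ∫ x, ((Set.Ioc (1/2:ℝ) 1).indicator (1:ℝ→ℝ) x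
      + (1/2) * ({(1/2:ℝ)} : Set ℝ).indicator (1:ℝ→ℝ) x) ∂π := by
    rw [integral_add i1 (i2.const_mul _), integral_const_mul,
      integral_indicator_one measurableSet_Ioc,
      integral_indicator_one (measurableSet_singleton _)]
    rw [Vinf]
    rfl
  have hmono : Vinf π ≤ ∫ x, (x^2 - 2*a*x + a^2) / c^2 ∂π := by
    rw [hVinf]
    refine integral_mono (i1.add (i2.const_mul _)) hQint ?_
    intro x
    have hxa : (x^2 - 2*a*x + a^2) / c^2 = (x-a)^2 / c^2 := by ring
    by_cases hx : x ∈ Set.Ioc (1/2:ℝ) 1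
    · have hx12 : x ∉ ({(1/2:ℝ)} : Set ℝ) := by
        simp only [Set.mem_singleton_iff]
        intro h; rw [h] at hx; exact absurd hx.1 (lt_irrefl _)
      simp only [Set.indicator_of_mem hx, Set.indicator_of_notMem hx12, Pi.one_apply,
        mul_zero, add_zero]
      rw [hxa, le_div_iff₀ (by positivity)]
      have h1 : x - a = (x - 1/2) + c := by linarith [hca]
      rw [h1]
      nlinarith [mul_nonneg (by linarith [hx.1] : (0:ℝ) ≤ x - 1/2) hcpos.le,
        sq_nonneg (x - 1/2)]
    · by_cases hx2 : x = 1/2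
      · subst hx2
        simp only [Set.indicator_of_notMem hx,
          Set.indicator_of_mem (Set.mem_singleton (1/2:ℝ)), Pi.one_apply, zero_add]
        rw [hxa, show ((1:ℝ)/2 - a)^2 = c^2 from by rw [hca],
          div_self (by positivity : (c:ℝ)^2 ≠ 0)]
        norm_num
      · have hx2' : x ∉ ({(1/2:ℝ)} : Set ℝ) := by simpa using hx2
        simp only [Set.indicator_of_notMem hx, Set.indicator_of_notMem hx2', mul_zero,
          add_zero]
        rw [hxa]
        positivity
  calc Vinf π ≤ ∫ x, (x^2 - 2*a*x + a^2) / c^2 ∂π := hmono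
    _ = (ν - 2*a*μ + a^2) / c^2 := hQval
    _ = (ν - μ ^ 2) / (ν + 1 / 4 - μ) := alg1 μ ν a c hA hca hD.ne' hcpos.ne'

/-- **Fractional endpoint branch.** For `0 ≤ μ ≤ 1/2` and `μ² < ν ≤ μ/2`, the supremum of
`V_∞(π)` over the two-moment class `M(μ,ν)` equals `(ν − μ²)/(ν + 1/4 − μ)`.  The
supremum is sharp: it is the limit of `V_∞` along a sequence of feasible two-point laws,
though it need not be attained. -/
theorem endpoint_fractional_branch (μ ν : ℝ) (hμ0 : 0 ≤ μ) (hμ1 : μ ≤ 1 / 2)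
    (hν1 : μ ^ 2 < ν) (hν2 : ν ≤ μ / 2) :
    IsLUB {x | ∃ π ∈ momentClass μ ν, Vinf π = x} ((ν - μ ^ 2) / (ν + 1 / 4 - μ)) ∧
    ∃ πs : ℕ → Measure ℝ,
      (∀ k, πs k ∈ momentClass μ ν ∧
        ∃ s : Finset ℝ, s.card ≤ 2 ∧ πs k ((↑s : Set ℝ)ᶜ) = 0) ∧
      Tendsto (fun k => Vinf (πs k)) atTop (nhds ((ν - μ ^ 2) / (ν + 1 / 4 - μ))) := by
  have hμlt : μ < 1/2 := by
    rcases lt_or_eq_of_le hμ1 with h | h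
    · exact h
    · exfalso; nlinarith
  have hD : 0 < ν + 1/4 - μ := by nlinarith [sq_nonneg (μ - 1/2)]
  -- the approximating two-point laws
  set b : ℕ → ℝ := fun k => 1/2 + 1/(2*((k:ℝ)+1)) with hbdef
  have hbeq : ∀ k, b k = 1/2 + 1/(2*((k:ℝ)+1)) := fun k => rfl
  have hbk : ∀ k, 1/2 < b k ∧ b k ≤ 1 := by
    intro k
    have h1 : (0:ℝ) < (k:ℝ) + 1 := by positivity
    constructor
    · have : 0 < 1/(2*((k:ℝ)+1)) := by positivity
      simp only [hbdef]; linarith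
    · simp only [hbdef]
      have : 1/(2*((k:ℝ)+1)) ≤ 1/2 := by
        rw [div_le_div_iff₀ (by positivity) (by norm_num)]
        nlinarith [Nat.cast_nonneg (α := ℝ) k]
      linarith
  set aa : ℕ → ℝ := fun k => (μ * b k - ν)/(b k - μ) with haadef
  set den : ℕ → ℝ := fun k => (b k)^2 - 2*μ*(b k) + ν with hdendef
  set p : ℕ → ℝ := fun k => (ν - μ^2)/(den k) with hpdef
  have haaeq : ∀ k, aa k = (μ * b k - ν)/(b k - μ) := fun k => rfl
  have hdeneq : ∀ k, den k = (b k)^2 - 2*μ*(b k) + ν := fun k => rfl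
  have hpeq : ∀ k, p k = (ν - μ^2)/(den k) := fun k => rfl
  clear_value b aa den p
  clear hbdef haadef hdendef hpdef
  have hbμ : ∀ k, 0 < b k - μ := by
    intro k
    have h1 := (hbk k).1
    linarith
  have hdenpos : ∀ k, 0 < den k := by
    intro k
    have : den k = (b k - μ)^2 + (ν - μ^2) := by rw [hdeneq]; ring
    rw [this]; nlinarith [sq_nonneg (b k - μ)]
  have hp0 : ∀ k, 0 < p k := fun k => by
    rw [hpeq]; exact div_pos (by nlinarith) (hdenpos k)
  have hp1 : ∀ k, p k < 1 := by
    intro k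
    rw [hpeq, div_lt_one (hdenpos k)]
    have : den k = (b k - μ)^2 + (ν - μ^2) := by rw [hdeneq]; ring
    nlinarith [sq_nonneg (b k - μ), (hbμ k)]
  have haa0 : ∀ k, 0 ≤ aa k := by
    intro k
    rw [haaeq]
    apply div_nonneg _ (hbμ k).le
    have h1 := (hbk k).1
    nlinarith [mul_nonneg hμ0 (by linarith : (0:ℝ) ≤ b k - 1/2)]
  have haalt : ∀ k, aa k < μ := by
    intro k
    rw [haaeq, div_lt_iff₀ (hbμ k)]
    nlinarith
  have hmom : ∀ k, (1 - p k)*(aa k) + (p k)*(b k) = μ ∧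
      (1 - p k)*(aa k)^2 + (p k)*(b k)^2 = ν :=
    fun k => moments_generic μ ν (aa k) (b k) (p k) (hbμ k).ne'
      (by rw [← hdeneq]; exact (hdenpos k).ne') (haaeq k) (by rw [hpeq, hdeneq])
  -- membership in the moment class
  have hmem : ∀ k, twoPt (p k) (aa k) (b k) ∈ momentClass μ ν := by
    intro k
    refine ⟨twoPt_prob _ _ _ (hp0 k).le (hp1 k).le, ?_, ?_, ?_⟩
    · apply twoPt_null
      · simp only [Set.mem_compl_iff, not_not]
        exact ⟨haa0 k, by linarith [haalt k]⟩
      · simp only [Set.mem_compl_iff, not_not]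
        exact ⟨by linarith [(hbk k).1], (hbk k).2⟩
    · rw [integral_twoPt _ _ _ _ (hp0 k).le (hp1 k).le]; exact (hmom k).1
    · rw [integral_twoPt _ _ _ _ (hp0 k).le (hp1 k).le]; exact (hmom k).2
  -- value of the endpoint functional
  have hVeq : ∀ k, Vinf (twoPt (p k) (aa k) (b k)) = p k := by
    intro k
    have haanot : aa k ∉ Set.Ioc (1/2:ℝ) 1 := by
      intro h
      have h1 := haalt k
      have h2 := h.1
      linarith
    have haanot2 : aa k ∉ ({(1/2:ℝ)} : Set ℝ) := by
      simp only [Set.mem_singleton_iff]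
      intro h
      have h1 := haalt k
      rw [h] at h1
      linarith
    have hbnot2 : b k ∉ ({(1/2:ℝ)} : Set ℝ) := by
      simp only [Set.mem_singleton_iff]
      intro h
      have h1 := (hbk k).1
      rw [h] at h1
      exact absurd h1 (lt_irrefl _)
    rw [Vinf, twoPt_apply haanot ⟨(hbk k).1, (hbk k).2⟩ (hp0 k).le,
      twoPt_null haanot2 hbnot2]
    simp
  -- convergence
  have hbt : Tendsto b atTop (nhds (1/2)) := by
    have h2 := tendsto_one_div_add_atTop_nhds_zero_nat.const_mul (1/2 : ℝ)
    rw [mul_zero] at h2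
    have h0 : Tendsto (fun k : ℕ => 1/(2*((k:ℝ)+1))) atTop (nhds 0) :=
      Tendsto.congr (fun k => by rw [div_mul_div_comm]; norm_num) h2
    have h3 := h0.const_add (1/2 : ℝ)
    rw [add_zero] at h3
    exact Tendsto.congr (fun k => (hbeq k).symm) h3
  have hdent : Tendsto den atTop (nhds (ν + 1/4 - μ)) := by
    have h4 : Tendsto (fun k => (b k)^2 - 2*μ*(b k) + ν) atTop
        (nhds ((1/2)^2 - 2*μ*(1/2) + ν)) :=
      (((hbt.pow 2).sub (hbt.const_mul (2*μ))).add tendsto_const_nhds)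
    have h5 : ((1:ℝ)/2)^2 - 2*μ*(1/2) + ν = ν + 1/4 - μ := by ring
    rw [h5] at h4
    exact Tendsto.congr (fun k => (hdeneq k).symm) h4
  have hptend : Tendsto p atTop (nhds ((ν - μ^2)/(ν + 1/4 - μ))) := by
    have := (tendsto_const_nhds (x := ν - μ^2) (f := atTop (α := ℕ))).div hdent hD.ne'
    exact Tendsto.congr (fun k => (hpeq k).symm) this
  have hVtend : Tendsto (fun k => Vinf (twoPt (p k) (aa k) (b k))) atTop
      (nhds ((ν - μ^2)/(ν + 1/4 - μ))) :=
    Tendsto.congr (fun k => (hVeq k).symm) hptend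
  constructor
  · constructor
    · rintro x ⟨π, hπ, rfl⟩
      exact upper_bound μ ν hμlt hν1 hν2 π hπ
    · intro y hy
      have hub : ∀ k, p k ≤ y := fun k =>
        hy ⟨twoPt (p k) (aa k) (b k), hmem k, hVeq k⟩
      exact le_of_tendsto hptend (Filter.Eventually.of_forall hub)
  · refine ⟨fun k => twoPt (p k) (aa k) (b k), fun k => ⟨hmem k, {aa k, b k}, ?_, ?_⟩, hVtend⟩
    · apply le_trans (Finset.card_insert_le _ _); simp
    · apply twoPt_null <;> simp
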